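/- Let f⁰ ∈ (ℝ³)^n and f¹ = A(n)f⁰. Then the total Dirichlet energy of the subdivided configuration satisfies ‖f¹ - Tf¹‖² + ‖f⁰ - f¹‖² ≤ λ_1(n) ‖f⁰ - Tf⁰‖², where λ_1(n) = 1/(1+4sin²(π/n)) < 1. -/

import Mathlib

open Matrix Real Finset

/-- The cyclic shift permutation matrix: `T eᵢ = e_{i+1}`. -/
def shiftMat (n : ℕ) [NeZero n] : Matrix (Fin n) (Fin n) ℝ :=
  Matrix.of fun i j => if j = i + 1 then 1 else 0

/-- The matrix `B(n) = 3 Iₙ - T - Tᵗ`. -/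
def Bmat (n : ℕ) [NeZero n] : Matrix (Fin n) (Fin n) ℝ :=
  (3 : ℝ) • (1 : Matrix (Fin n) (Fin n) ℝ) - shiftMat n - (shiftMat n)ᵀ

/-- `A(n) = B(n)⁻¹`. -/
noncomputable def Amat (n : ℕ) [NeZero n] : Matrix (Fin n) (Fin n) ℝ := (Bmat n)⁻¹

/-- `λ₁(n) = 1/(1 + 4 sin²(π/n))`. -/
noncomputable def lam1 (n : ℕ) : ℝ := 1 / (1 + 4 * Real.sin (Real.pi / n) ^ 2)


/-- Componentwise action of an `n × n` matrix on an `n`-tuple of points of `ℝ³`. -/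
noncomputable def applyMat {n : ℕ} (M : Matrix (Fin n) (Fin n) ℝ)
    (g : Fin n → EuclideanSpace ℝ (Fin 3)) : Fin n → EuclideanSpace ℝ (Fin 3) :=
  fun i => ∑ j, M i j • g j

/-- The cyclic shift acting on `n`-tuples of points of `ℝ³`. -/
def shiftTup {n : ℕ} [NeZero n] (g : Fin n → EuclideanSpace ℝ (Fin 3)) :
    Fin n → EuclideanSpace ℝ (Fin 3) := fun i => g (i + 1)

/-- `‖g‖² = Σᵢ |gᵢ|²`. -/
noncomputable def sqE {n : ℕ} (g : Fin n → EuclideanSpace ℝ (Fin 3)) : ℝ :=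
  ∑ i, ‖g i‖ ^ 2


section AuxFourier
open Complex ZMod
open scoped ComplexConjugate

set_option linter.unusedSectionVars false

variable {N : ℕ} [NeZero N]


lemma conj_stdAddChar (a : ZMod N) : conj (stdAddChar a) = stdAddChar (-a) := by
  rw [ZMod.stdAddChar_apply, ZMod.stdAddChar_apply, ← Circle.coe_inv_eq_conj, ← AddChar.map_neg_eq_inv]

lemma dft_conj (Φ : ZMod N → ℂ) (k : ZMod N) :
    conj (dft Φ k) = dft (fun j => conj (Φ j)) (-k) := by
  rw [dft_apply, dft_apply, _root_.map_sum]
  refine Finset.sum_congr rfl fun j _ => ?_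
  rw [smul_eq_mul, smul_eq_mul, _root_.map_mul, conj_stdAddChar, neg_neg, mul_neg, neg_neg]

lemma parseval (Φ : ZMod N → ℂ) :
    ∑ k, Complex.normSq (dft Φ k) = N * ∑ j, Complex.normSq (Φ j) := by
  have key : ∑ k, (dft Φ k * conj (dft Φ k)) = (N : ℂ) * ∑ j, (Φ j * conj (Φ j)) := by
    calc ∑ k, (dft Φ k * conj (dft Φ k))
        = ∑ k, ∑ j, (stdAddChar (-(j * k)) * Φ j) * dft (fun j => conj (Φ j)) (-k) := by
          refine Finset.sum_congr rfl fun k _ => ?_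
          rw [dft_conj, dft_apply, Finset.sum_mul]
          refine Finset.sum_congr rfl fun j _ => by rw [smul_eq_mul]
      _ = ∑ j, Φ j * ∑ k, stdAddChar (-(j * k)) * dft (fun j => conj (Φ j)) (-k) := by
          rw [Finset.sum_comm]
          refine Finset.sum_congr rfl fun j _ => ?_
          rw [Finset.mul_sum]; refine Finset.sum_congr rfl fun k _ => by ring
      _ = ∑ j, Φ j * ∑ k, stdAddChar (j * k) * dft (fun j => conj (Φ j)) k := by
          refine Finset.sum_congr rfl fun j _ => ?_
          congr 1
          exact Fintype.sum_equiv (Equiv.neg _) _ _ fun k => by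
            simp [mul_neg, neg_neg]
      _ = ∑ j, Φ j * ((N : ℂ) * conj (Φ j)) := by
          refine Finset.sum_congr rfl fun j _ => ?_
          congr 1
          have h := congrFun (ZMod.dft_dft (fun j => conj (Φ j))) (-j)
          rw [dft_apply] at h
          simp only [neg_neg, smul_eq_mul] at h
          rw [← h]
          refine Finset.sum_congr rfl fun k _ => by rw [mul_neg, neg_neg, mul_comm j k]
      _ = (N : ℂ) * ∑ j, (Φ j * conj (Φ j)) := by rw [Finset.mul_sum]; exact Finset.sum_congr rfl fun j _ => by ring
  have := congrArg Complex.re key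
  simpa [Complex.mul_conj, ← Complex.ofReal_sum, Complex.ofReal_mul] using this

lemma dft_shift (Φ : ZMod N → ℂ) (k : ZMod N) :
    dft (fun j => Φ (j + 1)) k = stdAddChar k * dft Φ k := by
  rw [dft_apply, dft_apply, Finset.mul_sum]
  refine Fintype.sum_equiv (Equiv.addRight (1 : ZMod N)) _ _ fun j => ?_
  simp only [Equiv.coe_addRight, smul_eq_mul]
  rw [← mul_assoc, ← AddChar.map_add_eq_mul]
  ring_nf


lemma normSq_one_sub_char (k : ZMod N) :
    Complex.normSq (1 - stdAddChar k) = 4 * Real.sin (Real.pi * k.val / N) ^ 2 := by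
  have h : (stdAddChar k : ℂ) = Complex.exp ((2 * Real.pi * k.val / N : ℝ) * Complex.I) := by
    rw [ZMod.stdAddChar_apply, ZMod.toCircle_apply]
    push_cast
    ring_nf
  rw [h, Complex.exp_mul_I, ← Complex.ofReal_cos, ← Complex.ofReal_sin]
  have hθ : Real.pi * k.val / N = (2 * Real.pi * k.val / N) / 2 := by ring
  rw [hθ]
  set θ : ℝ := 2 * Real.pi * k.val / N with hθdef
  simp only [Complex.normSq_apply, Complex.sub_re, Complex.sub_im, Complex.one_re,
    Complex.one_im, Complex.add_re, Complex.add_im, Complex.ofReal_re, Complex.ofReal_im,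
    Complex.mul_re, Complex.mul_im, Complex.I_re, Complex.I_im]
  have h1 := Real.sin_sq_add_cos_sq θ
  have h2 := Real.cos_two_mul (θ / 2)
  have h3 := Real.sin_sq_add_cos_sq (θ / 2)
  have h4 : 2 * (θ / 2) = θ := by ring
  rw [h4] at h2
  nlinarith [h1, h2, h3]

lemma sin_mono_bound (hn : 3 ≤ N) (v : ℕ) (h1 : 1 ≤ v) (h2 : v ≤ N - 1) :
    Real.sin (Real.pi / N) ≤ Real.sin (Real.pi * v / N) := by
  have hN : (0:ℝ) < N := by positivity
  have hNn : (3:ℝ) ≤ N := by exact_mod_cast hn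
  have hv1 : (1:ℝ) ≤ v := by exact_mod_cast h1
  have hv2 : (v:ℝ) ≤ N - 1 := by
    have : (v:ℝ) ≤ ((N - 1 : ℕ) : ℝ) := by exact_mod_cast h2
    rw [Nat.cast_sub (by omega)] at this
    simpa using this
  have hpi := Real.pi_pos
  have hx1 : Real.pi / N ≤ Real.pi * v / N := by
    exact (div_le_div_iff_of_pos_right hN).mpr (by nlinarith)
  have hx0 : 0 < Real.pi / N := by positivity
  have hhalf : Real.pi / N ≤ Real.pi / 2 := by
    apply div_le_div_of_nonneg_left hpi.le (by norm_num) (by linarith)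
  have hub : Real.pi * v / N ≤ Real.pi - Real.pi / N := by
    rw [div_le_iff₀ hN]
    have hc : Real.pi / N * N = Real.pi := div_mul_cancel₀ _ hN.ne'
    nlinarith [hc]
  rcases le_or_gt (Real.pi * v / N) (Real.pi / 2) with hc | hc
  · exact Real.strictMonoOn_sin.monotoneOn ⟨by linarith, hhalf⟩ ⟨by linarith, hc⟩ hx1
  · have hm := Real.strictMonoOn_sin.monotoneOn (a := Real.pi / N)
      (b := Real.pi - Real.pi * v / N) ⟨by linarith, hhalf⟩
      ⟨by linarith, by linarith⟩ (by linarith)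
    rwa [Real.sin_pi_sub] at hm

lemma wirt_zmod (hn : 3 ≤ N) (g : ZMod N → ℝ) (h0 : ∑ i, g i = 0) :
    4 * Real.sin (Real.pi / N) ^ 2 * ∑ i, (g i) ^ 2 ≤ ∑ i, (g i - g (i + 1)) ^ 2 := by
  classical
  set s1 : ℝ := 4 * Real.sin (Real.pi / N) ^ 2 with hs1
  set Φ : ZMod N → ℂ := fun j => (g j : ℂ) with hΦ
  set Ψ : ZMod N → ℂ := fun j => Φ j - Φ (j + 1) with hΨ
  have hd : ∀ k, dft Ψ k = (1 - stdAddChar k) * dft Φ k := by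
    intro k
    have hsub : Ψ = Φ - (fun j => Φ (j + 1)) := by funext j; simp [hΨ]
    rw [hsub, _root_.map_sub]
    rw [Pi.sub_apply, dft_shift]
    ring
  have h00 : dft Φ 0 = 0 := by
    rw [dft_apply_zero]
    have : ∑ j, Φ j = ((∑ i, g i : ℝ) : ℂ) := by push_cast [hΦ]; rfl
    rw [this, h0, Complex.ofReal_zero]
  have key : ∀ k, s1 * Complex.normSq (dft Φ k) ≤ Complex.normSq (dft Ψ k) := by
    intro k
    rcases eq_or_ne k 0 with rfl | hk
    · rw [h00, hd, h00, mul_zero]; simp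
    · rw [hd, Complex.normSq_mul, normSq_one_sub_char]
      have hb := sin_mono_bound (N := N) hn k.val
        (Nat.pos_of_ne_zero (by simpa [ZMod.val_eq_zero] using hk))
        (by have := ZMod.val_lt k; omega)
      have hs0 : 0 ≤ Real.sin (Real.pi / N) := by
        apply Real.sin_nonneg_of_nonneg_of_le_pi
        · positivity
        · have hpi := Real.pi_pos
          have : (1:ℝ) ≤ N := by
            have : (3:ℝ) ≤ N := by exact_mod_cast hn
            linarith
          rw [div_le_iff₀ (by positivity)]
          nlinarith
      have : s1 ≤ 4 * Real.sin (Real.pi * k.val / N) ^ 2 := by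
        rw [hs1]
        have := sq_le_sq' (by linarith) hb
        nlinarith
      nlinarith [Complex.normSq_nonneg (dft Φ k), Complex.normSq_nonneg (1 - stdAddChar k)]
  have hsum : s1 * ∑ k, Complex.normSq (dft Φ k) ≤ ∑ k, Complex.normSq (dft Ψ k) := by
    rw [Finset.mul_sum]
    exact Finset.sum_le_sum fun k _ => key k
  rw [parseval, parseval] at hsum
  have hΦsq : ∀ j, Complex.normSq (Φ j) = (g j) ^ 2 := fun j => by
    simp [hΦ, Complex.normSq_ofReal, sq]
  have hΨsq : ∀ j, Complex.normSq (Ψ j) = (g j - g (j + 1)) ^ 2 := fun j => by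
    have : Ψ j = ((g j - g (j + 1) : ℝ) : ℂ) := by push_cast [hΨ, hΦ]; ring
    rw [this, Complex.normSq_ofReal, sq]
  simp only [hΦsq, hΨsq] at hsum
  have hNpos : (0:ℝ) < N := by
    have : 0 < N := Nat.pos_of_ne_zero (NeZero.ne N)
    exact_mod_cast this
  nlinarith [hsum]

/-- The additive-structure-respecting equivalence `Fin n ≃ ZMod n`. -/
def finZModEquiv (n : ℕ) [NeZero n] : Fin n ≃ ZMod n where
  toFun i := (i.val : ZMod n)
  invFun z := ⟨z.val, ZMod.val_lt z⟩
  left_inv i := by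
    ext
    simp [ZMod.val_natCast, Nat.mod_eq_of_lt i.isLt]
  right_inv z := ZMod.natCast_zmod_val z

lemma finZModEquiv_add_one (n : ℕ) [NeZero n] (i : Fin n) :
    finZModEquiv n (i + 1) = finZModEquiv n i + 1 := by
  show (((i + 1 : Fin n)).val : ZMod n) = (i.val : ZMod n) + 1
  rw [Fin.add_def]
  show (((i.val + (1 : Fin n).val) % n : ℕ) : ZMod n) = _
  rw [ZMod.natCast_mod, Nat.cast_add, Fin.val_one', ZMod.natCast_mod, Nat.cast_one]

lemma wirt_fin (n : ℕ) [NeZero n] (hn : 3 ≤ n) (g : Fin n → ℝ) (h0 : ∑ i, g i = 0) :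
    4 * Real.sin (Real.pi / n) ^ 2 * ∑ i, (g i) ^ 2 ≤ ∑ i, (g i - g (i + 1)) ^ 2 := by
  set e := finZModEquiv n
  set G : ZMod n → ℝ := fun z => g (e.symm z) with hG
  have hGe : ∀ i : Fin n, G (e i) = g i := fun i => by rw [hG]; simp
  have h0' : ∑ z, G z = 0 := by rw [hG, Equiv.sum_comp e.symm g]; exact h0
  have main := wirt_zmod hn G h0'
  have e1 : ∑ z, (G z) ^ 2 = ∑ i, (g i) ^ 2 := by
    rw [← Equiv.sum_comp e (fun z => (G z) ^ 2)]
    exact Finset.sum_congr rfl fun i _ => by rw [hGe]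
  have e2 : ∑ z, (G z - G (z + 1)) ^ 2 = ∑ i, (g i - g (i + 1)) ^ 2 := by
    rw [← Equiv.sum_comp e (fun z => (G z - G (z + 1)) ^ 2)]
    refine Finset.sum_congr rfl fun i _ => ?_
    rw [← finZModEquiv_add_one, hGe, hGe]
  rw [e1, e2] at main
  exact main

end AuxFourier

lemma Bmat_mulVec (n : ℕ) [NeZero n] (x : Fin n → ℝ) (i : Fin n) :
    (Bmat n).mulVec x i = 3 * x i - x (i + 1) - x (i - 1) := by
  simp only [Bmat, sub_mulVec, smul_mulVec, one_mulVec, Pi.sub_apply, Pi.smul_apply,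
    smul_eq_mul]
  have h1 : (shiftMat n).mulVec x i = x (i + 1) := by
    simp only [mulVec, dotProduct, shiftMat, of_apply]
    rw [Finset.sum_eq_single (i + 1) (fun b _ hb => by simp [hb]) (by simp)]
    simp
  have h2 : (shiftMat n)ᵀ.mulVec x i = x (i - 1) := by
    simp only [mulVec, dotProduct, transpose_apply, shiftMat, of_apply]
    rw [Finset.sum_eq_single (i - 1) (fun b _ hb => by
      have : i ≠ b + 1 := fun h => hb (by rw [h, add_sub_cancel_right])
      simp [this]) (by simp)]
    simp [sub_add_cancel]
  rw [h1, h2]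

lemma Bmat_det_ne_zero (n : ℕ) [NeZero n] : (Bmat n).det ≠ 0 := by
  intro hdet
  obtain ⟨v, hv, hBv⟩ := (Matrix.exists_mulVec_eq_zero_iff).mpr hdet
  have hquad : v ⬝ᵥ (Bmat n).mulVec v = 0 := by rw [hBv, dotProduct_zero]
  have hterm : ∀ i : Fin n, v i * ((Bmat n).mulVec v i)
      = 3 * (v i) ^ 2 - v i * v (i + 1) - v i * v (i - 1) := fun i => by
    rw [Bmat_mulVec]; ring
  have hexp : v ⬝ᵥ (Bmat n).mulVec v
      = 3 * ∑ i, (v i) ^ 2 - (∑ i, v i * v (i + 1)) - (∑ i, v i * v (i - 1)) := by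
    simp only [dotProduct, hterm]
    rw [Finset.sum_sub_distrib, Finset.sum_sub_distrib, ← Finset.mul_sum]
  have hshift : ∑ i, v i * v (i - 1) = ∑ i, v (i + 1) * v i := by
    refine Fintype.sum_equiv (Equiv.subRight (1 : Fin n)) _ _ fun i => ?_
    simp [Equiv.subRight_apply, sub_add_cancel]
  have hsq : ∑ i, (v (i + 1)) ^ 2 = ∑ i, (v i) ^ 2 := by
    refine Fintype.sum_equiv (Equiv.addRight (1 : Fin n)) _ _ fun i => by simp
  have hcross : 2 * ∑ i, v i * v (i + 1) ≤ 2 * ∑ i, (v i) ^ 2 := by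
    rw [Finset.mul_sum]
    calc ∑ i, 2 * (v i * v (i + 1))
        ≤ ∑ i, ((v i) ^ 2 + (v (i + 1)) ^ 2) :=
          Finset.sum_le_sum fun i _ => by nlinarith [sq_nonneg (v i - v (i + 1))]
      _ = 2 * ∑ i, (v i) ^ 2 := by rw [Finset.sum_add_distrib, hsq]; ring
  have hpos : 0 < ∑ i, (v i) ^ 2 := by
    obtain ⟨i, hi⟩ := Function.ne_iff.mp hv
    exact Finset.sum_pos' (fun j _ => sq_nonneg _)
      ⟨i, Finset.mem_univ i, by
        have hvi : v i ≠ 0 := by simpa using hi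
        positivity⟩
  have hgt : v ⬝ᵥ (Bmat n).mulVec v > 0 := by
    rw [hexp, hshift]
    have he : ∑ i, v (i + 1) * v i = ∑ i, v i * v (i + 1) :=
      Finset.sum_congr rfl fun i _ => by ring
    rw [he]
    nlinarith [hcross, hpos]
  linarith

lemma Bmat_Amat_inverse (n : ℕ) [NeZero n] (u : Fin n → ℝ) :
    (Bmat n).mulVec ((Amat n).mulVec u) = u := by
  rw [Amat, Matrix.mulVec_mulVec,
    Matrix.mul_nonsing_inv _ (isUnit_iff_ne_zero.mpr (Bmat_det_ne_zero n)), Matrix.one_mulVec]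

lemma sin_pi_div_pos (n : ℕ) (hn : 3 ≤ n) : 0 < Real.sin (Real.pi / n) := by
  have hpi := Real.pi_pos
  have hN : (3:ℝ) ≤ n := by exact_mod_cast hn
  apply Real.sin_pos_of_pos_of_lt_pi
  · positivity
  · rw [div_lt_iff₀ (by linarith)]
    nlinarith

lemma scalar_main (n : ℕ) [NeZero n] (hn : 3 ≤ n) (u v : Fin n → ℝ)
    (huv : ∀ i, u i = 3 * v i - v (i + 1) - v (i - 1)) :
    (∑ i, (v i - v (i + 1)) ^ 2) + (∑ i, (u i - v i) ^ 2)
      ≤ lam1 n * ∑ i, (u i - u (i + 1)) ^ 2 := by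
  set s1 : ℝ := 4 * Real.sin (Real.pi / n) ^ 2 with hs1
  set g : Fin n → ℝ := fun i => v i - v (i + 1) with hg
  set h : Fin n → ℝ := fun i => g i - g (i + 1) with hh
  have sumshift : ∀ w : Fin n → ℝ, ∑ i, w (i + 1) = ∑ i, w i := fun w =>
    Fintype.sum_equiv (Equiv.addRight (1 : Fin n)) _ _ fun i => by simp
  have hg0 : ∑ i, g i = 0 := by
    simp only [hg, Finset.sum_sub_distrib, sumshift v, sub_self]
  have hh0 : ∑ i, h i = 0 := by
    simp only [hh, Finset.sum_sub_distrib, sumshift g, sub_self]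
  have hval : ∀ i : Fin n, h (i - 1) = v (i - 1) - 2 * v i + v (i + 1) := by
    intro i
    have e1 : i - 1 + 1 = i := sub_add_cancel i 1
    show (v (i - 1) - v (i - 1 + 1)) - (v (i - 1 + 1) - v (i - 1 + 1 + 1)) = _
    rw [e1]; ring
  have hvi : ∀ i : Fin n, h i = v i - 2 * v (i + 1) + v (i + 1 + 1) := by
    intro i
    show (v i - v (i + 1)) - (v (i + 1) - v (i + 1 + 1)) = _
    ring
  have hsum2 : ∑ i, (u i - v i) ^ 2 = ∑ i, (h i) ^ 2 := by
    have : ∀ i : Fin n, (u i - v i) ^ 2 = (h (i - 1)) ^ 2 := by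
      intro i
      rw [hval i, huv i]; ring
    rw [Finset.sum_congr rfl fun i _ => this i]
    refine Fintype.sum_equiv (Equiv.subRight (1 : Fin n)) _ _ fun i => by simp
  have hdu : ∀ i : Fin n, u i - u (i + 1) = g i + (h i - h (i - 1)) := by
    intro i
    have hgi : g i = v i - v (i + 1) := rfl
    rw [huv i, huv (i + 1), hvi i, hval i, hgi, add_sub_cancel_right]
    ring
  -- cross term
  have hcross : ∑ i, g i * (h i - h (i - 1)) = ∑ i, (h i) ^ 2 := by
    have h1 : ∑ i, g i * h (i - 1) = ∑ i, g (i + 1) * h i := by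
      refine Fintype.sum_equiv (Equiv.subRight (1 : Fin n)) _ _ fun i => by
        simp [Equiv.subRight_apply, sub_add_cancel]
    have expand : ∀ i : Fin n, g i * (h i - h (i - 1)) = g i * h i - g i * h (i - 1) :=
      fun i => by ring
    rw [Finset.sum_congr rfl fun i _ => expand i, Finset.sum_sub_distrib, h1,
      ← Finset.sum_sub_distrib]
    refine Finset.sum_congr rfl fun i _ => ?_
    have hrfl : g i - g (i + 1) = h i := rfl
    linear_combination (h i) * hrfl
  have hE : ∑ i, (h i - h (i - 1)) ^ 2 = ∑ i, (h i - h (i + 1)) ^ 2 := by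
    refine Fintype.sum_equiv (Equiv.subRight (1 : Fin n)) _ _ fun i => by
      simp [Equiv.subRight_apply, sub_add_cancel]
      ring
  have hRHS : ∑ i, (u i - u (i + 1)) ^ 2
      = ∑ i, (g i) ^ 2 + 2 * ∑ i, (h i) ^ 2 + ∑ i, (h i - h (i + 1)) ^ 2 := by
    have expand : ∀ i : Fin n, (u i - u (i + 1)) ^ 2
        = (g i) ^ 2 + (h i - h (i - 1)) ^ 2 + 2 * (g i * (h i - h (i - 1))) := by
      intro i; rw [hdu i]; ring
    rw [Finset.sum_congr rfl fun i _ => expand i, Finset.sum_add_distrib,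
      Finset.sum_add_distrib, ← Finset.mul_sum, hcross, hE]
    ring
  have w1 : s1 * ∑ i, (g i) ^ 2 ≤ ∑ i, (h i) ^ 2 := by
    have := wirt_fin n hn g hg0
    simpa [← hs1] using this
  have w2 : s1 * ∑ i, (h i) ^ 2 ≤ ∑ i, (h i - h (i + 1)) ^ 2 := by
    have := wirt_fin n hn h hh0
    simpa [← hs1] using this
  rw [hsum2, hRHS, lam1, ← hs1, div_mul_eq_mul_div, le_div_iff₀ (by
    have := sin_pi_div_pos n hn; positivity)]
  nlinarith [w1, w2]

lemma sqE_eq {n : ℕ} (g : Fin n → EuclideanSpace ℝ (Fin 3)) :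
    sqE g = ∑ j : Fin 3, ∑ i, (g i j) ^ 2 := by
  rw [sqE, Finset.sum_comm]
  refine Finset.sum_congr rfl fun i _ => ?_
  rw [EuclideanSpace.norm_eq, Real.sq_sqrt (by positivity)]
  exact Finset.sum_congr rfl fun j _ => by rw [Real.norm_eq_abs, sq_abs]


theorem stmt8 (n : ℕ) [NeZero n] (hn : 3 ≤ n) (f0 : Fin n → EuclideanSpace ℝ (Fin 3)) :
    sqE (applyMat (Amat n) f0 - shiftTup (applyMat (Amat n) f0)) +
        sqE (f0 - applyMat (Amat n) f0) ≤
      lam1 n * sqE (f0 - shiftTup f0) ∧ lam1 n < 1 := by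
  constructor
  · set f1 := applyMat (Amat n) f0 with hf1
    have hvc : ∀ j : Fin 3, (fun i => f1 i j) = (Amat n).mulVec (fun i => f0 i j) := by
      intro j
      funext i
      show (∑ k, Amat n i k • f0 k) j = _
      rw [WithLp.ofLp_sum, Finset.sum_apply]
      simp only [PiLp.smul_apply, smul_eq_mul]
      rfl
    have huv : ∀ (j : Fin 3) (i : Fin n),
        f0 i j = 3 * f1 i j - f1 (i + 1) j - f1 (i - 1) j := by
      intro j i
      have h := congrFun (Bmat_Amat_inverse n (fun i => f0 i j)) i
      rw [Bmat_mulVec] at h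
      rw [← h, ← hvc j]
    have key : ∀ j : Fin 3,
        (∑ i, (f1 i j - f1 (i + 1) j) ^ 2) + (∑ i, (f0 i j - f1 i j) ^ 2)
          ≤ lam1 n * ∑ i, (f0 i j - f0 (i + 1) j) ^ 2 := by
      intro j
      have hdu : ∀ i : Fin n, f0 i j - f0 (i + 1) j =
          3 * f1 i j - f1 (i+1) j - f1 (i-1) j - (3 * f1 (i+1) j - f1 (i+1+1) j - f1 (i+1-1) j) := by
        intro i; rw [huv j i, huv j (i + 1)]
      exact scalar_main n hn (fun i => f0 i j) (fun i => f1 i j) (huv j)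
    have e1 : sqE (f1 - shiftTup f1) = ∑ j : Fin 3, ∑ i, (f1 i j - f1 (i + 1) j) ^ 2 := by
      rw [sqE_eq]
      refine Finset.sum_congr rfl fun j _ => Finset.sum_congr rfl fun i _ => ?_
      congr 1
    have e2 : sqE (f0 - f1) = ∑ j : Fin 3, ∑ i, (f0 i j - f1 i j) ^ 2 := by
      rw [sqE_eq]
      refine Finset.sum_congr rfl fun j _ => Finset.sum_congr rfl fun i _ => ?_
      congr 1
    have e3 : sqE (f0 - shiftTup f0) = ∑ j : Fin 3, ∑ i, (f0 i j - f0 (i + 1) j) ^ 2 := by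
      rw [sqE_eq]
      refine Finset.sum_congr rfl fun j _ => Finset.sum_congr rfl fun i _ => ?_
      congr 1
    rw [e1, e2, e3, Finset.mul_sum, ← Finset.sum_add_distrib]
    exact Finset.sum_le_sum fun j _ => key j
  · have hs := sin_pi_div_pos n hn
    rw [lam1, div_lt_one (by positivity)]
    nlinarith
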